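/- For all vectors a, b ∈ ℝ^N and all m with 1 < m < 2 and a, b not both zero, the inequality (|a|^(m-2) a − |b|^(m-2) b) · (a − b) ≥ (m−1) · |a − b|² / (|a| + |b|)^(2−m) holds. -/

import Mathlib

open Real

section aux

variable {m : ℝ} (hm1 : 1 < m) (hm2 : m < 2)

private lemma pm1 (hm1 : 1 < m) {α : ℝ} (hα : 0 ≤ α) : α ^ (m - 2) * α = α ^ (m - 1) := by
  rw [← Real.rpow_add_one' hα (show m - 2 + 1 ≠ 0 by intro h; linarith [h])]
  ring_nf

private lemma pm2 (hm1 : 1 < m) {α : ℝ} (hα : 0 ≤ α) : α ^ (m - 1) * α = α ^ m := by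
  rw [← Real.rpow_add_one' hα (show m - 1 + 1 ≠ 0 by intro h; linarith [h])]
  ring_nf

/-- Real subadditivity of `x ^ p` for `0 ≤ p ≤ 1`. -/
private lemma subadd {p α β : ℝ} (hp0 : 0 ≤ p) (hp1 : p ≤ 1) (hα : 0 ≤ α) (hβ : 0 ≤ β) :
    (α + β) ^ p ≤ α ^ p + β ^ p := by
  exact_mod_cast NNReal.rpow_add_le_add_rpow ⟨α, hα⟩ ⟨β, hβ⟩ hp0 hp1

/-- Endpoint 1: `(m-1)(α-β)(α+β)^(m-2) ≤ α^(m-1) - β^(m-1)` for `0 ≤ β ≤ α`, `0 < α`. -/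
private lemma e1 (hm1 : 1 < m) (hm2 : m < 2) {α β : ℝ} (hβ : 0 ≤ β) (hβα : β ≤ α)
    (hα : 0 < α) :
    (m - 1) * (α - β) * (α + β) ^ (m - 2) ≤ α ^ (m - 1) - β ^ (m - 1) := by
  -- Bernoulli: (β/α)^(m-1) ≤ 1 + (m-1)(β/α - 1)
  have hs : (-1 : ℝ) ≤ β / α - 1 := by
    have : 0 ≤ β / α := div_nonneg hβ hα.le
    linarith
  have hbern := rpow_one_add_le_one_add_mul_self hs (p := m - 1) (by linarith) (by linarith)
  rw [show (1 : ℝ) + (β / α - 1) = β / α by ring] at hbern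
  have hdiv : (β / α) ^ (m - 1) = β ^ (m - 1) / α ^ (m - 1) :=
    Real.div_rpow hβ hα.le _
  have hαpow : (0 : ℝ) < α ^ (m - 1) := Real.rpow_pos_of_pos hα _
  -- multiply Bernoulli by α^(m-1)
  have key : β ^ (m - 1) ≤ α ^ (m - 1) + (m - 1) * (α ^ (m - 2) * β - α ^ (m - 1)) := by
    have h := mul_le_mul_of_nonneg_left hbern hαpow.le
    rw [hdiv, mul_div_cancel₀ _ (ne_of_gt hαpow)] at h
    have hfrac : α ^ (m - 1) * (β / α) = α ^ (m - 2) * β := by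
      rw [← pm1 hm1 hα.le]
      field_simp
    calc β ^ (m - 1) ≤ α ^ (m - 1) * (1 + (m - 1) * (β / α - 1)) := h
      _ = α ^ (m - 1) + (m - 1) * (α ^ (m - 1) * (β / α) - α ^ (m - 1)) := by ring
      _ = α ^ (m - 1) + (m - 1) * (α ^ (m - 2) * β - α ^ (m - 1)) := by rw [hfrac]
  -- (α+β)^(m-2) ≤ α^(m-2)
  have hmono : (α + β) ^ (m - 2) ≤ α ^ (m - 2) :=
    Real.rpow_le_rpow_of_nonpos hα (by linarith) (by linarith)
  have h1 : (m - 1) * (α - β) * (α + β) ^ (m - 2) ≤ (m - 1) * (α - β) * α ^ (m - 2) := by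
    apply mul_le_mul_of_nonneg_left hmono
    nlinarith
  have hAe : α ^ (m - 2) * α = α ^ (m - 1) := pm1 hm1 hα.le
  have h2 : (m - 1) * (α - β) * α ^ (m - 2) ≤ α ^ (m - 1) - β ^ (m - 1) := by
    have he : (m - 1) * (α - β) * α ^ (m - 2)
        = (m - 1) * (α ^ (m - 1) - α ^ (m - 2) * β) := by rw [← hAe]; ring
    rw [he]; linarith
  linarith

/-- Endpoint 2: `(m-1)(α+β)^(m-1) ≤ α^(m-1) + β^(m-1)`. -/
private lemma e2 (hm1 : 1 < m) (hm2 : m < 2) {α β : ℝ} (hα : 0 ≤ α) (hβ : 0 ≤ β) :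
    (m - 1) * (α + β) ^ (m - 1) ≤ α ^ (m - 1) + β ^ (m - 1) := by
  have h1 : (α + β) ^ (m - 1) ≤ α ^ (m - 1) + β ^ (m - 1) :=
    subadd (by linarith) (by linarith) hα hβ
  have h2 : (0 : ℝ) ≤ (α + β) ^ (m - 1) := Real.rpow_nonneg (by linarith) _
  nlinarith

/-- The scalar inequality, ordered case `β ≤ α`. -/
private lemma key_ord (hm1 : 1 < m) (hm2 : m < 2) {α β t : ℝ} (hβ : 0 ≤ β) (hβα : β ≤ α)
    (hs : 0 < α + β) (ht : |t| ≤ α * β) :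
    (m - 1) * (α ^ 2 + β ^ 2 - 2 * t) * (α + β) ^ (m - 2) ≤
      α ^ m + β ^ m - (α ^ (m - 2) + β ^ (m - 2)) * t := by
  have hα : 0 < α := by linarith
  set A2 := α ^ (m - 2) with hA2
  set B2 := β ^ (m - 2) with hB2
  set A := α ^ (m - 1) with hA
  set B := β ^ (m - 1) with hB
  set K := (α + β) ^ (m - 2) with hK
  have hA2A : A2 * α = A := pm1 hm1 hα.le
  have hB2B : B2 * β = B := pm1 hm1 hβ
  have hAm : A * α = α ^ m := pm2 hm1 hα.le
  have hBm : B * β = β ^ m := pm2 hm1 hβ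
  have hKs : K * (α + β) = (α + β) ^ (m - 1) := pm1 hm1 hs.le
  -- endpoint at t = αβ
  have hplus : 0 ≤ α ^ m + β ^ m - (A2 + B2) * (α * β) - (m - 1) * (α - β) ^ 2 * K := by
    have he1 := e1 hm1 hm2 hβ hβα hα
    have h := mul_le_mul_of_nonneg_left he1 (show (0:ℝ) ≤ α - β by linarith)
    nlinarith [h]
  -- endpoint at t = -αβ
  have hminus : 0 ≤ α ^ m + β ^ m + (A2 + B2) * (α * β) - (m - 1) * (α + β) ^ 2 * K := by
    have he2 := e2 hm1 hm2 hα.le hβ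
    have h := mul_le_mul_of_nonneg_left he2 hs.le
    rw [← hKs] at h
    nlinarith [h]
  -- affine in t
  have ht1 : t ≤ α * β := (abs_le.mp ht).2
  have ht2 : -(α * β) ≤ t := (abs_le.mp ht).1
  rcases le_total (A2 + B2) (2 * (m - 1) * K) with hc | hc
  · nlinarith [mul_le_mul_of_nonneg_left hc (show (0:ℝ) ≤ α * β + t by linarith)]
  · nlinarith [mul_le_mul_of_nonneg_left hc (show (0:ℝ) ≤ α * β - t by linarith)]

/-- The scalar inequality. -/
private lemma key (hm1 : 1 < m) (hm2 : m < 2) {α β t : ℝ} (hα : 0 ≤ α) (hβ : 0 ≤ β)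
    (hs : 0 < α + β) (ht : |t| ≤ α * β) :
    (m - 1) * (α ^ 2 + β ^ 2 - 2 * t) * (α + β) ^ (m - 2) ≤
      α ^ m + β ^ m - (α ^ (m - 2) + β ^ (m - 2)) * t := by
  rcases le_total β α with h | h
  · exact key_ord hm1 hm2 hβ h hs ht
  · have := key_ord hm1 hm2 hα h (by linarith) (by rwa [mul_comm])
    have e : β + α = α + β := by ring
    rw [e] at this
    linarith

end aux

open Classical in
/-- Tartar's inequality, singular case `1 < m < 2`:
`(|a|^(m-2) a − |b|^(m-2) b) · (a − b) ≥ (m−1) |a − b|² / (|a| + |b|)^(2−m)`,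
where `|a|^(m−2) a` is interpreted as `0` when `a = 0`. -/
theorem stmt3 {N : ℕ} (m : ℝ) (hm1 : 1 < m) (hm2 : m < 2)
    (a b : EuclideanSpace ℝ (Fin N)) (hab : a ≠ 0 ∨ b ≠ 0) :
    (m - 1) * ‖a - b‖ ^ 2 / (‖a‖ + ‖b‖) ^ (2 - m) ≤
      inner ℝ ((if a = 0 then 0 else (‖a‖ ^ (m - 2)) • a)
        - (if b = 0 then 0 else (‖b‖ ^ (m - 2)) • b)) (a - b) := by
  have hifa : (if a = 0 then (0 : EuclideanSpace ℝ (Fin N)) else (‖a‖ ^ (m - 2)) • a)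
      = (‖a‖ ^ (m - 2)) • a := by split <;> simp [*]
  have hifb : (if b = 0 then (0 : EuclideanSpace ℝ (Fin N)) else (‖b‖ ^ (m - 2)) • b)
      = (‖b‖ ^ (m - 2)) • b := by split <;> simp [*]
  rw [hifa, hifb]
  set α := ‖a‖ with hα
  set β := ‖b‖ with hβ
  have hinner : (inner ℝ ((‖a‖ ^ (m - 2)) • a - (‖b‖ ^ (m - 2)) • b) (a - b) : ℝ)
      = α ^ (m - 2) * α ^ 2 + β ^ (m - 2) * β ^ 2
        - (α ^ (m - 2) + β ^ (m - 2)) * (inner ℝ a b : ℝ) := by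
    simp only [inner_sub_left, inner_sub_right, real_inner_smul_left,
      real_inner_self_eq_norm_sq, real_inner_comm b a]
    ring
  set t : ℝ := inner ℝ a b with htdef
  have hα0 : 0 ≤ α := norm_nonneg a
  have hβ0 : 0 ≤ β := norm_nonneg b
  have hs : 0 < α + β := by
    rcases hab with h | h
    · have : 0 < α := norm_pos_iff.mpr h
      linarith
    · have : 0 < β := norm_pos_iff.mpr h
      linarith
  have ht : |t| ≤ α * β := abs_real_inner_le_norm a b
  have hnorm : ‖a - b‖ ^ 2 = α ^ 2 + β ^ 2 - 2 * t := by
    rw [norm_sub_sq_real]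
    ring
  have hpowa : α ^ (m - 2) * α ^ 2 = α ^ m := by
    rw [sq, ← mul_assoc, pm1 hm1 hα0, pm2 hm1 hα0]
  have hpowb : β ^ (m - 2) * β ^ 2 = β ^ m := by
    rw [sq, ← mul_assoc, pm1 hm1 hβ0, pm2 hm1 hβ0]
  have hdivrw : (m - 1) * ‖a - b‖ ^ 2 / (α + β) ^ (2 - m)
      = (m - 1) * (α ^ 2 + β ^ 2 - 2 * t) * (α + β) ^ (m - 2) := by
    rw [hnorm, div_eq_mul_inv, ← Real.rpow_neg hs.le, show -(2 - m) = m - 2 by ring]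
  rw [hdivrw, hinner, hpowa, hpowb]
  exact key hm1 hm2 hα0 hβ0 hs ht
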